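/- Let N ≥ 1 and α ∈ [π/2, π]. If there exists a real vector y, indexed by the triples (N0,N1,N2) of nonnegative integers with N0+N1+N2 = N, with all entries nonnegative and y ≠ 0, such that C_{α,N} y = 0 (i.e., for every j ∈ {0,…,N}, ∑_{(N0,N1,N2)} C_{α,N}(j,(N0,N1,N2)) · y(N0,N1,N2) = 0), then α ∈ [π/2 + π/(2N), π]. -/

import Mathlib

open Complex Real Finset

/-- Triples `(N0, N1, N2)` of nonnegative integers with `N0 + N1 + N2 = N`. -/
def Triple (N : ℕ) : Type := {t : ℕ × ℕ × ℕ // t.1 + t.2.1 + t.2.2 = N}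

noncomputable instance (N : ℕ) : Fintype (Triple N) :=
  Fintype.ofInjective
    (fun t : Triple N =>
      ((⟨t.1.1, by have := t.2; omega⟩ : Fin (N + 1)),
       (⟨t.1.2.1, by have := t.2; omega⟩ : Fin (N + 1)),
       (⟨t.1.2.2, by have := t.2; omega⟩ : Fin (N + 1))))
    (by
      rintro ⟨⟨a, b, c⟩, h⟩ ⟨⟨a', b', c'⟩, h'⟩ heq
      simp only [Prod.mk.injEq, Fin.mk.injEq] at heq
      exact Subtype.ext (by simp only [Prod.mk.injEq]; exact ⟨heq.1, heq.2.1, heq.2.2⟩))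

/-- The entries of the reduced matrix `C_{α,N}`. -/
noncomputable def Cmat (α : ℝ) (N : ℕ) (j : Fin (N + 1)) (t : Triple N) : ℂ :=
  if t.1.1 ≤ N - (j : ℕ) ∧ t.1.2.1 ≤ (j : ℕ) then
    ((N - (j : ℕ)).choose t.1.1 : ℂ) *
      (-Complex.exp (α * Complex.I) ^ 2) ^ (N - (j : ℕ) - t.1.1) *
      ((j : ℕ).choose t.1.2.1 : ℂ) *
      Complex.exp (α * Complex.I) ^ ((j : ℕ) - t.1.2.1)
  else 0

/-- Necessity: if the reduced system `C_{α,N} y = 0` has a nontrivial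
nonnegative solution with `α ∈ [π/2, π]`, then `α ∈ [π/2 + π/(2N), π]`. -/
lemma cast_tri (a b c d : ℕ) :
    ((a+b+c+d).choose (b+c) * ((b+c).choose b) * ((a+d).choose a) : ℂ) =
    ((a+b+c+d).choose b * ((a+c+d).choose a) * ((c+d).choose c) : ℂ) := by
  rw [Nat.cast_choose ℂ (show b+c ≤ a+b+c+d by omega),
      Nat.cast_choose ℂ (show b ≤ b+c by omega),
      Nat.cast_choose ℂ (show a ≤ a+d by omega),
      Nat.cast_choose ℂ (show b ≤ a+b+c+d by omega),
      Nat.cast_choose ℂ (show a ≤ a+c+d by omega),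
      Nat.cast_choose ℂ (show c ≤ c+d by omega),
      show a+b+c+d-(b+c) = a+d by omega, show b+c-b = c by omega,
      show a+d-a = d by omega, show a+b+c+d-b = a+c+d by omega,
      show a+c+d-a = c+d by omega, show c+d-c = d by omega]
  have h : ∀ n : ℕ, ((Nat.factorial n : ℂ)) ≠ 0 := fun n => Nat.cast_ne_zero.mpr (Nat.factorial_ne_zero n)
  field_simp [h]

lemma row_sum (z R : ℂ) (N N0 N1 N2 : ℕ) (h : N0 + N1 + N2 = N) :
    ∑ j ∈ Finset.range (N+1),
      (N.choose j : ℂ) * R^(N-j) *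
        (if N0 ≤ N - j ∧ N1 ≤ j then
          ((N - j).choose N0 : ℂ) * (-z ^ 2) ^ (N - j - N0) * ((j).choose N1 : ℂ) * z ^ (j - N1)
        else 0)
    = (N.choose N1 : ℂ) * ((N - N1).choose N0 : ℂ) * R ^ N0 * (z - R * z^2) ^ N2 := by
  have hstep : ∀ j ∈ Finset.range (N+1),
      (N.choose j : ℂ) * R^(N-j) *
        (if N0 ≤ N - j ∧ N1 ≤ j then
          ((N - j).choose N0 : ℂ) * (-z ^ 2) ^ (N - j - N0) * ((j).choose N1 : ℂ) * z ^ (j - N1)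
        else 0)
      = (N.choose j : ℂ) * ((j).choose N1 : ℂ) * ((N - j).choose N0 : ℂ)
          * R^(N-j) * (-z ^ 2) ^ (N - j - N0) * z ^ (j - N1) := by
    intro j hj
    by_cases hc : N0 ≤ N - j ∧ N1 ≤ j
    · rw [if_pos hc]; ring
    · rw [if_neg hc]
      rcases not_and_or.mp hc with h' | h'
      · have h0 : (N - j).choose N0 = 0 := Nat.choose_eq_zero_of_lt (by omega)
        simp [h0]
      · have h0 : (j).choose N1 = 0 := Nat.choose_eq_zero_of_lt (by omega)
        simp [h0]
  rw [Finset.sum_congr rfl hstep]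
  rw [show Finset.range (N+1) = Finset.range (N+1) from rfl]
  have hsub : Finset.Ico N1 (N1 + (N2+1)) ⊆ Finset.range (N+1) := by
    intro x hx; simp only [Finset.mem_Ico] at hx; simp only [Finset.mem_range]; omega
  rw [← Finset.sum_subset hsub (by
    intro x hx hnx
    simp only [Finset.mem_range] at hx
    simp only [Finset.mem_Ico, not_and, not_lt] at hnx
    by_cases hx1 : x < N1
    · have h0 : (x).choose N1 = 0 := Nat.choose_eq_zero_of_lt hx1
      simp [h0]
    · have h0 : (N - x).choose N0 = 0 := Nat.choose_eq_zero_of_lt (by omega)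
      simp [h0])]
  rw [Finset.sum_Ico_eq_sum_range, Nat.add_sub_cancel_left]
  have hterm : ∀ k ∈ Finset.range (N2+1),
      (N.choose (N1+k) : ℂ) * (((N1+k)).choose N1 : ℂ) * ((N - (N1+k)).choose N0 : ℂ)
          * R^(N-(N1+k)) * (-z ^ 2) ^ (N - (N1+k) - N0) * z ^ ((N1+k) - N1)
      = (N.choose N1 : ℂ) * ((N - N1).choose N0 : ℂ) * R ^ N0 *
          (z ^ k * (-(R * z^2)) ^ (N2-k) * (N2.choose k : ℂ)) := by
    intro k hk
    simp only [Finset.mem_range] at hk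
    have hk2 : k ≤ N2 := by omega
    have e1 : N - (N1+k) = N0 + (N2-k) := by omega
    have e2 : N - (N1+k) - N0 = N2 - k := by omega
    have e3 : (N1+k) - N1 = k := by omega
    have key := cast_tri N0 N1 k (N2-k)
    rw [show N0+N1+k+(N2-k) = N by omega, show N0+k+(N2-k) = N - N1 by omega,
        show k+(N2-k) = N2 by omega, show N1+k = N1 + k from rfl] at key
    rw [e2, e3, e1]
    have : ((N.choose (N1+k) : ℂ)) * (((N1+k)).choose N1 : ℂ) * (((N0+(N2-k)).choose N0 : ℂ))
        = (N.choose N1 : ℂ) * ((N - N1).choose N0 : ℂ) * ((N2.choose k : ℂ)) := by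
      exact_mod_cast key
    rw [show ((-z^2):ℂ)^(N2-k) = (-1:ℂ)^(N2-k) * (z^2)^(N2-k) from by rw [neg_pow],
        show (-(R*z^2):ℂ)^(N2-k) = (-1:ℂ)^(N2-k) * (R^(N2-k) * (z^2)^(N2-k)) from by
          rw [neg_pow, mul_pow],
        pow_add R N0 (N2-k), this]
    ring
  rw [Finset.sum_congr rfl hterm, ← Finset.mul_sum]
  rw [show (z - R*z^2) = z + (-(R*z^2)) by ring, add_pow]

lemma exists_R (N : ℕ) (hN : 1 ≤ N) (α : ℝ) (h1 : π/2 ≤ α) (h2 : α < π/2 + π/(2*N)) :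
    ∃ R : ℝ, 0 < R ∧ α - π/N < Real.arctan (R * Real.sin α / (1 - R * Real.cos α)) := by
  have hπ := Real.pi_pos
  have hNR : (1:ℝ) ≤ (N:ℝ) := by exact_mod_cast hN
  have hNpos : (0:ℝ) < (N:ℝ) := by linarith
  have hhalf : π/(2*(N:ℝ)) ≤ π/2 := by
    rw [div_le_div_iff₀ (by positivity) (by norm_num)]
    nlinarith
  have hαπ : α < π := by linarith
  have hkey : π / (N:ℝ) = 2 * (π/(2*(N:ℝ))) := by field_simp
  have hsin : 0 < Real.sin α := Real.sin_pos_of_pos_of_lt_pi (by linarith) hαπ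
  have hcos : Real.cos α ≤ 0 := Real.cos_nonpos_of_pi_div_two_le_of_le h1 (by linarith)
  by_cases hθ : α - π/(N:ℝ) ≤ 0
  · refine ⟨1, one_pos, ?_⟩
    have hd : (1:ℝ) ≤ 1 - 1 * Real.cos α := by nlinarith
    have hX : 0 < 1 * Real.sin α / (1 - 1 * Real.cos α) := div_pos (by linarith) (by linarith)
    have harc : Real.arctan 0 < Real.arctan (1 * Real.sin α / (1 - 1 * Real.cos α)) :=
      Real.arctan_strictMono hX
    rw [Real.arctan_zero] at harc
    linarith
  · push_neg at hθ
    set θ' := α - π/(N:ℝ) with hθ'def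
    have hθ0 : 0 < θ' := hθ
    have hθ2 : θ' < π/2 := by rw [hθ'def]; linarith
    have hsumlt : α + θ' < π := by rw [hθ'def]; linarith
    have hfin : α - π/(N:ℝ) = θ' := rfl
    clear_value θ'
    have hcosθ : 0 < Real.cos θ' := Real.cos_pos_of_mem_Ioo ⟨by linarith, hθ2⟩
    have htanθ : 0 < Real.tan θ' := Real.tan_pos_of_pos_of_lt_pi_div_two hθ0 hθ2
    set τ := Real.tan θ' with hτ
    have hsum : 0 < Real.sin (α + θ') :=
      Real.sin_pos_of_pos_of_lt_pi (by linarith) hsumlt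
    have hexp : (Real.sin α + τ * Real.cos α) * Real.cos θ' = Real.sin (α + θ') := by
      rw [Real.sin_add, hτ, Real.tan_eq_sin_div_cos]
      field_simp
    have harctan : Real.arctan τ = θ' := by
      rw [hτ]; exact Real.arctan_tan (by linarith) hθ2
    clear_value τ
    have hD : 0 < Real.sin α + τ * Real.cos α := by nlinarith
    refine ⟨(τ+1)/(Real.sin α + τ * Real.cos α), by positivity, ?_⟩
    set R := (τ+1)/(Real.sin α + τ * Real.cos α) with hR
    have hR0 : 0 < R := by positivity
    have hRD : R * (Real.sin α + τ * Real.cos α) = τ + 1 := by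
      rw [hR]; field_simp
    clear_value R
    have hden : (0:ℝ) < 1 - R * Real.cos α := by nlinarith
    have hXgt : τ < R * Real.sin α / (1 - R * Real.cos α) := by
      rw [lt_div_iff₀ hden]
      nlinarith
    have hmono := Real.arctan_strictMono hXgt
    linarith

lemma mu_polar (α R : ℝ) (hsin : 0 < Real.sin α) (hden : 0 < 1 - R * Real.cos α)
    (hR : 0 < R) :
    ∃ s : ℝ, 0 < s ∧ Complex.exp (α * Complex.I) - (R:ℂ) * Complex.exp (α * Complex.I)^2
      = (s:ℂ) * Complex.exp
          ((α - Real.arctan (R * Real.sin α / (1 - R * Real.cos α)) : ℝ) * Complex.I) := by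
  set X := R * Real.sin α / (1 - R * Real.cos α) with hX
  have hX0 : 0 < X := div_pos (mul_pos hR hsin) hden
  set β := Real.arctan X with hβ
  have hcosβ : 0 < Real.cos β := Real.cos_arctan_pos X
  have hsinβ : Real.sin β = X * Real.cos β := by
    have h := Real.tan_arctan X
    rw [Real.tan_eq_sin_div_cos] at h
    rw [← hβ] at h
    field_simp at h
    linarith [h]
  have hXden : X * (1 - R * Real.cos α) = R * Real.sin α := by
    rw [hX]; field_simp
  refine ⟨Real.cos β * (1 - R * Real.cos α) + R * Real.sin α * Real.sin β, ?_, ?_⟩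
  · have hsβ : 0 < Real.sin β := by nlinarith
    nlinarith [mul_pos hcosβ hden, mul_pos (mul_pos hR hsin) hsβ]
  · have key : ((1:ℂ) - (R:ℂ) * Complex.exp (α * Complex.I)) * Complex.exp (β * Complex.I)
        = ((Real.cos β * (1 - R * Real.cos α) + R * Real.sin α * Real.sin β : ℝ) : ℂ) := by
      rw [Complex.exp_mul_I, Complex.exp_mul_I]
      rw [show Complex.cos (α:ℂ) = ((Real.cos α : ℝ):ℂ) from (Complex.ofReal_cos α).symm,
          show Complex.sin (α:ℂ) = ((Real.sin α : ℝ):ℂ) from (Complex.ofReal_sin α).symm,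
          show Complex.cos (β:ℂ) = ((Real.cos β : ℝ):ℂ) from (Complex.ofReal_cos β).symm,
          show Complex.sin (β:ℂ) = ((Real.sin β : ℝ):ℂ) from (Complex.ofReal_sin β).symm]
      apply Complex.ext
      · simp [Complex.mul_re, Complex.add_re, Complex.sub_re,
          Complex.cos_ofReal_re, Complex.sin_ofReal_re]
        ring
      · simp [Complex.mul_im, Complex.add_im, Complex.sub_im,
          Complex.cos_ofReal_re, Complex.sin_ofReal_re]
        linear_combination (1 - R*Real.cos α) * hsinβ + Real.cos β * hXden
    have hexpne : Complex.exp (β * Complex.I) ≠ 0 := Complex.exp_ne_zero _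
    have h1 : (1:ℂ) - (R:ℂ) * Complex.exp (α * Complex.I)
        = ((Real.cos β * (1 - R * Real.cos α) + R * Real.sin α * Real.sin β : ℝ) : ℂ)
          * (Complex.exp (β * Complex.I))⁻¹ := by
      rw [← key, mul_inv_cancel_right₀ hexpne]
    calc Complex.exp (α * Complex.I) - (R:ℂ) * Complex.exp (α * Complex.I)^2
        = Complex.exp (α * Complex.I) * ((1:ℂ) - (R:ℂ) * Complex.exp (α * Complex.I)) := by
          ring
      _ = ((Real.cos β * (1 - R * Real.cos α) + R * Real.sin α * Real.sin β : ℝ) : ℂ)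
          * (Complex.exp (α * Complex.I) * (Complex.exp (β * Complex.I))⁻¹) := by
          rw [h1]; ring
      _ = _ := by
          rw [← Complex.exp_neg, ← Complex.exp_add]
          congr 2
          push_cast
          ring

theorem C_nns_necessity (N : ℕ) (hN : 1 ≤ N) (α : ℝ)
    (hα : α ∈ Set.Icc (π / 2) π) (y : Triple N → ℝ)
    (hy0 : ∀ t, 0 ≤ y t) (hyne : y ≠ 0)
    (hy : ∀ j : Fin (N + 1), ∑ t : Triple N, Cmat α N j t * (y t : ℂ) = 0) :
    α ∈ Set.Icc (π / 2 + π / (2 * N)) π := by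
  obtain ⟨hα1, hα2⟩ := hα
  rw [Set.mem_Icc]
  refine ⟨?_, hα2⟩
  by_contra hcon
  push_neg at hcon
  have hπ := Real.pi_pos
  have hNR : (1:ℝ) ≤ (N:ℝ) := by exact_mod_cast hN
  have hNpos : (0:ℝ) < (N:ℝ) := by linarith
  have hhalf : π/(2*(N:ℝ)) ≤ π/2 := by
    rw [div_le_div_iff₀ (by positivity) (by norm_num)]
    nlinarith
  have hαπ : α < π := by linarith
  have hsin : 0 < Real.sin α := Real.sin_pos_of_pos_of_lt_pi (by linarith) hαπ
  have hcos : Real.cos α ≤ 0 := Real.cos_nonpos_of_pi_div_two_le_of_le hα1 (by linarith)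
  obtain ⟨R, hR0, hβlt⟩ := exists_R N hN α hα1 hcon
  have hden : (0:ℝ) < 1 - R * Real.cos α := by nlinarith
  obtain ⟨s, hs0, hmu⟩ := mu_polar α R hsin hden hR0
  set φ := α - Real.arctan (R * Real.sin α / (1 - R * Real.cos α)) with hφdef
  have harc2 : Real.arctan (R * Real.sin α / (1 - R * Real.cos α)) < π/2 :=
    Real.arctan_lt_pi_div_two _
  have hφ0 : 0 ≤ φ := by rw [hφdef]; linarith
  have hφlt : φ < π/(N:ℝ) := by rw [hφdef]; linarith
  clear_value φ
  have hNφ : (N:ℝ) * φ < π := by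
    have h1 := mul_lt_mul_of_pos_left hφlt hNpos
    have h2 : (N:ℝ) * (π/(N:ℝ)) = π := by field_simp
    rw [h2] at h1
    exact h1
  -- the weighted row combination vanishes
  have hrow : ∀ t : Triple N,
      (∑ j : Fin (N+1), ((N.choose (j:ℕ) : ℂ) * (R:ℂ)^(N - (j:ℕ)) * Cmat α N j t))
      = (N.choose t.1.2.1 : ℂ) * ((N - t.1.2.1).choose t.1.1 : ℂ) * (R:ℂ) ^ t.1.1 *
          (Complex.exp (α * Complex.I) - (R:ℂ) * Complex.exp (α * Complex.I)^2) ^ t.1.2.2 := by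
    rintro ⟨⟨N0, N1, N2⟩, ht⟩
    have hid := row_sum (Complex.exp (α * Complex.I)) (R:ℂ) N N0 N1 N2 ht
    rw [show (Complex.exp (α * Complex.I) - (R:ℂ) * Complex.exp (α * Complex.I)^2)
        = (Complex.exp (α * Complex.I) - (R:ℂ) * Complex.exp (α * Complex.I)^2) from rfl]
    rw [← hid]
    rw [← Fin.sum_univ_eq_sum_range (fun j =>
      (N.choose j : ℂ) * (R:ℂ)^(N-j) *
        (if N0 ≤ N - j ∧ N1 ≤ j then
          ((N - j).choose N0 : ℂ) * (-Complex.exp (α * Complex.I) ^ 2) ^ (N - j - N0) *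
            ((j).choose N1 : ℂ) * Complex.exp (α * Complex.I) ^ (j - N1)
        else 0)) (N+1)]
    exact Finset.sum_congr rfl fun j _ => by simp only [Cmat]
  have hvanish : ∑ t : Triple N,
      ((N.choose t.1.2.1 : ℂ) * ((N - t.1.2.1).choose t.1.1 : ℂ) * (R:ℂ) ^ t.1.1 *
        (Complex.exp (α * Complex.I) - (R:ℂ) * Complex.exp (α * Complex.I)^2) ^ t.1.2.2)
        * (y t : ℂ) = 0 := by
    calc ∑ t : Triple N,
        ((N.choose t.1.2.1 : ℂ) * ((N - t.1.2.1).choose t.1.1 : ℂ) * (R:ℂ) ^ t.1.1 *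
          (Complex.exp (α * Complex.I) - (R:ℂ) * Complex.exp (α * Complex.I)^2) ^ t.1.2.2)
          * (y t : ℂ)
        = ∑ t : Triple N,
            (∑ j : Fin (N+1), ((N.choose (j:ℕ) : ℂ) * (R:ℂ)^(N - (j:ℕ)) * Cmat α N j t))
            * (y t : ℂ) := Finset.sum_congr rfl fun t _ => by rw [hrow t]
      _ = ∑ t : Triple N, ∑ j : Fin (N+1),
            ((N.choose (j:ℕ) : ℂ) * (R:ℂ)^(N - (j:ℕ)) * Cmat α N j t) * (y t : ℂ) :=
          Finset.sum_congr rfl fun t _ => by rw [Finset.sum_mul]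
      _ = ∑ j : Fin (N+1), ∑ t : Triple N,
            ((N.choose (j:ℕ) : ℂ) * (R:ℂ)^(N - (j:ℕ)) * Cmat α N j t) * (y t : ℂ) :=
          Finset.sum_comm
      _ = ∑ j : Fin (N+1), ((N.choose (j:ℕ) : ℂ) * (R:ℂ)^(N - (j:ℕ)))
            * ∑ t : Triple N, Cmat α N j t * (y t : ℂ) := by
          refine Finset.sum_congr rfl fun j _ => ?_
          rw [Finset.mul_sum]
          exact Finset.sum_congr rfl fun t _ => by ring
      _ = 0 := by simp [hy]
  rw [hmu] at hvanish
  -- take the rotated real part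
  have h0 : ∑ t : Triple N,
      (Complex.exp ((-( (N:ℝ) * φ / 2) : ℝ) * Complex.I) *
        (((N.choose t.1.2.1 : ℂ) * ((N - t.1.2.1).choose t.1.1 : ℂ) * (R:ℂ) ^ t.1.1 *
          ((s:ℂ) * Complex.exp ((φ:ℝ) * Complex.I)) ^ t.1.2.2) * (y t : ℂ))).re = 0 := by
    rw [← Complex.re_sum, ← Finset.mul_sum, hvanish, mul_zero]
    simp
  have hterm : ∀ t : Triple N,
      (Complex.exp ((-( (N:ℝ) * φ / 2) : ℝ) * Complex.I) *
        (((N.choose t.1.2.1 : ℂ) * ((N - t.1.2.1).choose t.1.1 : ℂ) * (R:ℂ) ^ t.1.1 *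
          ((s:ℂ) * Complex.exp ((φ:ℝ) * Complex.I)) ^ t.1.2.2) * (y t : ℂ))).re
      = ((N.choose t.1.2.1 : ℝ) * ((N - t.1.2.1).choose t.1.1 : ℝ) * R ^ t.1.1 * s ^ t.1.2.2 *
          Real.cos ((t.1.2.2 : ℝ) * φ - (N:ℝ) * φ / 2)) * y t := by
    rintro ⟨⟨N0, N1, N2⟩, ht⟩
    have key : Complex.exp ((-( (N:ℝ) * φ / 2) : ℝ) * Complex.I) *
        (((N.choose N1 : ℂ) * ((N - N1).choose N0 : ℂ) * (R:ℂ) ^ N0 *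
          ((s:ℂ) * Complex.exp ((φ:ℝ) * Complex.I)) ^ N2) * ((y ⟨(N0,N1,N2), ht⟩ : ℝ) : ℂ))
        = (((N.choose N1 : ℝ) * ((N - N1).choose N0 : ℝ) * R ^ N0 * s ^ N2 *
            y ⟨(N0,N1,N2), ht⟩ : ℝ) : ℂ) *
          Complex.exp (((N2 : ℝ) * φ - (N:ℝ) * φ / 2 : ℝ) * Complex.I) := by
      rw [mul_pow, show (Complex.exp ((φ:ℝ) * Complex.I)) ^ N2
            = Complex.exp (((N2:ℝ) * φ : ℝ) * Complex.I) from by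
          rw [← Complex.exp_nat_mul]; congr 1; push_cast; ring,
        show ((((N2 : ℝ) * φ - (N:ℝ) * φ / 2 : ℝ)) : ℂ) * Complex.I
            = ((N2:ℝ) * φ : ℝ) * Complex.I + ((-( (N:ℝ) * φ / 2) : ℝ) : ℂ) * Complex.I from by
          push_cast; ring,
        Complex.exp_add]
      push_cast
      ring
    rw [key, Complex.re_ofReal_mul, Complex.exp_ofReal_mul_I_re]
    ring
  rw [Finset.sum_congr rfl (fun t _ => hterm t)] at h0
  -- positivity of coefficients
  have hK : ∀ t : Triple N,
      0 < (N.choose t.1.2.1 : ℝ) * ((N - t.1.2.1).choose t.1.1 : ℝ) * R ^ t.1.1 * s ^ t.1.2.2 *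
          Real.cos ((t.1.2.2 : ℝ) * φ - (N:ℝ) * φ / 2) := by
    rintro ⟨⟨N0, N1, N2⟩, ht⟩
    have ht' : N0 + N1 + N2 = N := ht
    have hc1 : 0 < (N.choose N1 : ℝ) := by
      exact_mod_cast Nat.choose_pos (show N1 ≤ N by omega)
    have hc2 : 0 < ((N - N1).choose N0 : ℝ) := by
      exact_mod_cast Nat.choose_pos (show N0 ≤ N - N1 by omega)
    have hN2N : (N2 : ℝ) ≤ (N : ℝ) := by exact_mod_cast (show N2 ≤ N by omega)
    have hb1 : 0 ≤ (N2:ℝ) * φ := mul_nonneg (by positivity) hφ0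
    have hb2 : (N2:ℝ) * φ ≤ (N:ℝ) * φ := mul_le_mul_of_nonneg_right hN2N hφ0
    have hcosp : 0 < Real.cos ((N2 : ℝ) * φ - (N:ℝ) * φ / 2) := by
      apply Real.cos_pos_of_mem_Ioo
      constructor
      · linarith
      · linarith
    positivity
  -- conclude y = 0
  have hz : ∀ t ∈ (Finset.univ : Finset (Triple N)),
      0 ≤ ((N.choose t.1.2.1 : ℝ) * ((N - t.1.2.1).choose t.1.1 : ℝ) * R ^ t.1.1 * s ^ t.1.2.2 *
          Real.cos ((t.1.2.2 : ℝ) * φ - (N:ℝ) * φ / 2)) * y t :=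
    fun t _ => mul_nonneg (hK t).le (hy0 t)
  have hall := (Finset.sum_eq_zero_iff_of_nonneg hz).mp h0
  apply hyne
  funext t
  have := hall t (Finset.mem_univ t)
  have hyt := (mul_eq_zero.mp this).resolve_left (hK t).ne'
  simpa using hyt
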